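/- Let G be a chestnut and let e be an exterior node of G. Then there exists a total legal configuration trail for G and the burst (e,e)⊥, in which the soliton enters at e, traverses the cycle of G exactly once, and leaves the graph again at e. -/

import Mathlib

/- Formalization of multi-soliton automata (Bordihn–Schulz),
   following the definitions of the paper. -/

namespace Soliton

variable {V : Type}

/-- An undirected, loopless graph on node set `V`. -/
structure SGraph (V : Type) where
  adj : V → V → Prop
  symm : ∀ u v, adj u v → adj v u
  loopless : ∀ v, ¬ adj v v

/-- Degree of a node: the number of neighbours. -/
noncomputable def degree (G : SGraph V) (n : V) : ℕ := Nat.card {v // G.adj n v}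

/-- An exterior node has degree 1. -/
def Exterior (G : SGraph V) (n : V) : Prop := degree G n = 1

/-- An interior node has degree at least 2. -/
def Interior (G : SGraph V) (n : V) : Prop := 2 ≤ degree G n

/-- A weight function: symmetric, with weight in {1,2} exactly on edges and 0 elsewhere. -/
def IsWeighting (G : SGraph V) (w : V → V → ℕ) : Prop :=
  (∀ u v, w u v = w v u) ∧
  (∀ u v, G.adj u v → w u v = 1 ∨ w u v = 2) ∧
  (∀ u v, ¬ G.adj u v → w u v = 0)

/-- The weight of a node: sum of the weights of the incident edges. -/
noncomputable def nodeWeight (w : V → V → ℕ) (n : V) : ℕ := ∑ᶠ v, w n v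

/-- A soliton graph: degrees between 1 and 3, node-weight conditions, and every
component contains an exterior node. -/
def IsSolitonGraph (G : SGraph V) (w : V → V → ℕ) : Prop :=
  IsWeighting G w ∧
  (∀ n, 1 ≤ degree G n ∧ degree G n ≤ 3) ∧
  (∀ n, Exterior G n → nodeWeight w n = 1 ∨ nodeWeight w n = 2) ∧
  (∀ n, Interior G n → nodeWeight w n = degree G n + 1) ∧
  (∀ n, ∃ e, Exterior G e ∧ Relation.ReflTransGen G.adj n e)

/-- A burst `(n₁,n₁')‖_{k₁}(n₂,n₂')‖_{k₂}⋯(n_m,n_m')⊥`: each soliton `i` has an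
entry node, an exit node, and a delay (the delay of the first soliton is 0). -/
structure Burst (V : Type) where
  m : ℕ
  hm : 0 < m
  entry : Fin m → V
  exit : Fin m → V
  delay : Fin m → ℕ
  delay_zero : delay ⟨0, hm⟩ = 0

/-- A burst for a soliton graph: all entry and exit nodes are exterior. -/
def IsBurstFor (G : SGraph V) (b : Burst V) : Prop :=
  ∀ i, Exterior G (b.entry i) ∧ Exterior G (b.exit i)

/-- The arrival time of soliton `i`: the sum of the delays up to and including `i`. -/
def Burst.arrival (b : Burst V) (i : Fin b.m) : ℕ :=
  ∑ j ∈ Finset.univ.filter (fun j => j ≤ i), b.delay j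

/-- The position of a soliton: `wait k` with `k ≥ 1` means `k` steps until entry,
`wait 0` means the soliton has left the graph, and `node n` means it is at node `n`. -/
inductive SolPos (V : Type) where
  | wait : ℕ → SolPos V
  | node : V → SolPos V

/-- The initial position map of a burst. -/
def initPos (b : Burst V) : Fin b.m → SolPos V := fun i =>
  if b.arrival i = 0 then SolPos.node (b.entry i) else SolPos.wait (b.arrival i)

/-- A position map is final if every soliton has left the graph. -/
def IsFinal {m : ℕ} (π : Fin m → SolPos V) : Prop := ∀ i, π i = SolPos.wait 0

/-- A configuration: a weighting of the graph together with a position map. -/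
abbrev Config (V : Type) (m : ℕ) := (V → V → ℕ) × (Fin m → SolPos V)

/-- The one-step (potential successor) relation on the position of a single soliton:
waiting counters decrease, soliton `i` enters at its entry node, a soliton in the
graph moves to an adjacent node, and a soliton may leave only at its exit node. -/
def PosStep (G : SGraph V) (b : Burst V) (i : Fin b.m) (p p' : SolPos V) : Prop :=
  (p = SolPos.wait 0 ∧ p' = SolPos.wait 0) ∨
  (p = SolPos.wait 1 ∧ p' = SolPos.node (b.entry i)) ∨
  (∃ k : ℕ, p = SolPos.wait (k + 2) ∧ p' = SolPos.wait (k + 1)) ∨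
  (∃ n : V, p = SolPos.node n ∧
    ((n = b.exit i ∧ p' = SolPos.wait 0) ∨ (∃ n', G.adj n n' ∧ p' = SolPos.node n')))

/-- Some soliton moves from `p` to `q` in the step from `π` to `π'`. -/
def MovesAlong {m : ℕ} (π π' : Fin m → SolPos V) (p q : V) : Prop :=
  ∃ i, π i = SolPos.node p ∧ π' i = SolPos.node q

/-- The weight of a traversed edge changes from `w` to `3 - w`; all other
weights remain unchanged. -/
def WeightStep {m : ℕ} (w w' : V → V → ℕ) (π π' : Fin m → SolPos V) : Prop :=
  ∀ p q : V,
    ((MovesAlong π π' p q ∨ MovesAlong π π' q p) → w' p q = 3 - w p q) ∧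
    (¬(MovesAlong π π' p q ∨ MovesAlong π π' q p) → w' p q = w p q)

/-- A single step between configurations. -/
def StepOk (G : SGraph V) (b : Burst V) (c c' : Config V b.m) : Prop :=
  (∀ i, PosStep G b i (c.2 i) (c'.2 i)) ∧ WeightStep c.1 c'.1 c.2 c'.2

/-- The conditions of a configuration trail involving two consecutive steps
`c, c', c''`: a soliton that has just entered moves on into the graph; a soliton
reaching its exit node from inside the graph leaves; consecutive edges traversed
by a soliton have alternating weights; a soliton never immediately turns around. -/
def TwoStepOk (G : SGraph V) (b : Burst V) (c c' c'' : Config V b.m) : Prop :=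
  ∀ i : Fin b.m,
    (∀ n : V, c'.2 i = SolPos.node n → Exterior G n → c.2 i = SolPos.wait 1 →
      ∃ r, c''.2 i = SolPos.node r) ∧
    (c'.2 i = SolPos.node (b.exit i) → Exterior G (b.exit i) →
      (∃ p, c.2 i = SolPos.node p) → c''.2 i = SolPos.wait 0) ∧
    (∀ p q r : V, c.2 i = SolPos.node p → c'.2 i = SolPos.node q → Interior G q →
      c''.2 i = SolPos.node r → c.1 p q ≠ c'.1 q r) ∧
    (c''.2 i ≠ SolPos.wait 0 → c''.2 i ≠ c'.2 i ∧ c''.2 i ≠ c.2 i)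

/-- A configuration trail for a soliton graph with weighting `w0` and a burst `b`. -/
def IsTrail (G : SGraph V) (w0 : V → V → ℕ) (b : Burst V) (len : ℕ)
    (cfg : Fin (len + 1) → Config V b.m) : Prop :=
  (cfg 0).1 = w0 ∧ (cfg 0).2 = initPos b ∧
  (∀ (j : ℕ) (h : j < len), StepOk G b (cfg ⟨j, by omega⟩) (cfg ⟨j + 1, by omega⟩)) ∧
  (∀ (h : 1 ≤ len) (i : Fin b.m) (n : V), (cfg 0).2 i = SolPos.node n →
    ∃ n', (cfg ⟨1, by omega⟩).2 i = SolPos.node n') ∧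
  (∀ (j : ℕ) (h : j + 2 ≤ len),
    TwoStepOk G b (cfg ⟨j, by omega⟩) (cfg ⟨j + 1, by omega⟩) (cfg ⟨j + 2, by omega⟩)) ∧
  (∀ (j : ℕ) (h : j < len), ¬ IsFinal (cfg ⟨j, by omega⟩).2)

/-- The legality conditions between two consecutive configurations: two solitons
at the same node move to different nodes, and two solitons never traverse the
same edge in opposite directions in the same step. -/
def LegalStep {m : ℕ} (G : SGraph V) (c c' : Config V m) : Prop :=
  (∀ i i' : Fin m, i ≠ i' → ∀ n : V, c.2 i = SolPos.node n → c.2 i' = SolPos.node n →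
    c'.2 i ≠ c'.2 i') ∧
  (∀ i i' : Fin m, i ≠ i' → ∀ p q : V, c.2 i = SolPos.node p → c.2 i' = SolPos.node q →
    G.adj p q → ¬(c'.2 i = SolPos.node q ∧ c'.2 i' = SolPos.node p))

/-- A legal configuration trail. -/
def IsLegalTrail (G : SGraph V) (w0 : V → V → ℕ) (b : Burst V) (len : ℕ)
    (cfg : Fin (len + 1) → Config V b.m) : Prop :=
  IsTrail G w0 b len cfg ∧
  ∀ (j : ℕ) (h : j < len), LegalStep G (cfg ⟨j, by omega⟩) (cfg ⟨j + 1, by omega⟩)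

/-- A total legal configuration trail: a legal trail whose last position map is final. -/
def IsTotalLegalTrail (G : SGraph V) (w0 : V → V → ℕ) (b : Burst V) (len : ℕ)
    (cfg : Fin (len + 1) → Config V b.m) : Prop :=
  IsLegalTrail G w0 b len cfg ∧ IsFinal (cfg (Fin.last len)).2

/-- `Result(G, b)`: the set of weightings obtained as final graphs of total legal
configuration trails for `(G, w0)` and `b`. -/
def ResultSet (G : SGraph V) (w0 : V → V → ℕ) (b : Burst V) : Set (V → V → ℕ) :=
  {w' | ∃ (len : ℕ) (cfg : Fin (len + 1) → Config V b.m),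
    IsTotalLegalTrail G w0 b len cfg ∧ (cfg (Fin.last len)).1 = w'}

/-- `States(G, B)`: the closure of `{w0}` under taking results of bursts in `B`. -/
inductive InStates (G : SGraph V) (w0 : V → V → ℕ) (B : Set (Burst V)) :
    (V → V → ℕ) → Prop
  | refl : InStates G w0 B w0
  | step {w' w'' : V → V → ℕ} {b : Burst V} (h : InStates G w0 B w') (hb : b ∈ B)
      (hr : w'' ∈ ResultSet G w' b) : InStates G w0 B w''

/-- `States(G, B)` as a set. -/
def StatesSet (G : SGraph V) (w0 : V → V → ℕ) (B : Set (Burst V)) :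
    Set (V → V → ℕ) := {w' | InStates G w0 B w'}

/-- The data of a configuration trail: a length together with a sequence of
configurations. -/
def TrailData (V : Type) (m : ℕ) := Σ len : ℕ, Fin (len + 1) → Config V m

/-- The trail data is a total legal configuration trail. -/
def IsTotalLegalTrailD (G : SGraph V) (w0 : V → V → ℕ) (b : Burst V)
    (t : TrailData V b.m) : Prop :=
  IsTotalLegalTrail G w0 b t.1 t.2

/-- The soliton automaton `A_B(G)` is strongly deterministic: for every state and
burst there is at most one total legal configuration trail. -/
def StronglyDet (G : SGraph V) (w0 : V → V → ℕ) (B : Set (Burst V)) : Prop :=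
  ∀ w', InStates G w0 B w' → ∀ b ∈ B, ∀ t t' : TrailData V b.m,
    IsTotalLegalTrailD G w' b t → IsTotalLegalTrailD G w' b t' → t = t'

/-- The prefix of length `i` of a sequence of configurations. -/
def prefixCfg {α : Type} {len : ℕ} (cfg : Fin (len + 1) → α) (i : ℕ) (h : i ≤ len) :
    Fin (i + 1) → α := fun j => cfg ⟨j, by have := j.isLt; omega⟩

/-- `SC(C)`: the set of position maps by which the configuration trail `C` can be
extended by one configuration. -/
def SC (G : SGraph V) (w0 : V → V → ℕ) (b : Burst V) (len : ℕ)
    (cfg : Fin (len + 1) → Config V b.m) : Set (Fin b.m → SolPos V) :=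
  {π' | ∃ wn : V → V → ℕ, IsTrail G w0 b (len + 1) (Fin.snoc cfg (wn, π'))}

/-- A configuration trail is perfect if no two of its configurations at distinct
positions are successor-equivalent (equal as configurations with equal sets of
possible successor position maps). -/
def IsPerfect (G : SGraph V) (w0 : V → V → ℕ) (b : Burst V) (len : ℕ)
    (cfg : Fin (len + 1) → Config V b.m) : Prop :=
  ∀ (i j : ℕ) (hij : i < j) (hj : j ≤ len),
    ¬(cfg ⟨i, by omega⟩ = cfg ⟨j, by omega⟩ ∧
      SC G w0 b i (prefixCfg cfg i (by omega)) = SC G w0 b j (prefixCfg cfg j hj))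

/-- The trail data is a perfect configuration trail. -/
def IsPerfectD (G : SGraph V) (w0 : V → V → ℕ) (b : Burst V)
    (t : TrailData V b.m) : Prop :=
  IsPerfect G w0 b t.1 t.2

/-- The soliton automaton `A_B(G)` is perfectly deterministic: for every state and
burst there is at most one perfect total legal configuration trail. -/
def PerfectlyDet (G : SGraph V) (w0 : V → V → ℕ) (B : Set (Burst V)) : Prop :=
  ∀ w', InStates G w0 B w' → ∀ b ∈ B, ∀ t t' : TrailData V b.m,
    IsTotalLegalTrailD G w' b t → IsPerfectD G w' b t →
    IsTotalLegalTrailD G w' b t' → IsPerfectD G w' b t' → t = t'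

/-- `g` is an upper bound on the amount of non-determinism of `A_B(G)`. -/
def DegreeBound (G : SGraph V) (w0 : V → V → ℕ) (B : Set (Burst V)) (g : ℕ) : Prop :=
  ∀ w', InStates G w0 B w' → ∀ b ∈ B, (ResultSet G w' b).ncard ≤ g

/-- The degree of non-determinism of `A_B(G)` is `g`: the smallest integer `g ≥ 1`
with `|Result(G', b)| ≤ g` for all states `G'` and bursts `b ∈ B`. -/
def HasDegreeOfNondeterminism (G : SGraph V) (w0 : V → V → ℕ) (B : Set (Burst V))
    (g : ℕ) : Prop :=
  1 ≤ g ∧ DegreeBound G w0 B g ∧ ∀ g', 1 ≤ g' → DegreeBound G w0 B g' → g ≤ g'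

/-- The edge `(u, v)` is used (in this direction) in the configuration trail `cfg`. -/
def UsedInTrail {m : ℕ} (len : ℕ) (cfg : Fin (len + 1) → Config V m) (u v : V) : Prop :=
  ∃ (j : ℕ) (h : j < len) (i : Fin m),
    (cfg ⟨j, by omega⟩).2 i = SolPos.node u ∧ (cfg ⟨j + 1, by omega⟩).2 i = SolPos.node v

/-- An indecomposable soliton graph: it contains no impervious path, i.e. every
edge is used in some configuration trail of some state reachable with some set
of bursts. -/
def Indecomposable (G : SGraph V) (w0 : V → V → ℕ) : Prop :=
  ∀ u v, G.adj u v →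
    ∃ B : Set (Burst V), (∀ b ∈ B, IsBurstFor G b) ∧
      ∃ w', InStates G w0 B w' ∧ ∃ b ∈ B, ∃ (len : ℕ) (cfg : Fin (len + 1) → Config V b.m),
        IsTrail G w' b len cfg ∧ (UsedInTrail len cfg u v ∨ UsedInTrail len cfg v u)

/-- Walks of a given length in a graph. -/
inductive WalkLen (G : SGraph V) : V → V → ℕ → Prop
  | refl (v : V) : WalkLen G v v 0
  | tail {u v x : V} {n : ℕ} : WalkLen G u v n → G.adj v x → WalkLen G u x (n + 1)

/-- The graph is connected. -/
def ConnectedG (G : SGraph V) : Prop := ∀ u v, Relation.ReflTransGen G.adj u v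

/-- The edge `(u, v)` is a bridge: removing it disconnects `u` from `v`. -/
def IsBridge (G : SGraph V) (u v : V) : Prop :=
  ¬ Relation.ReflTransGen (fun a c => G.adj a c ∧ ¬((a = u ∧ c = v) ∨ (a = v ∧ c = u))) u v

/-- The underlying graph is a tree: connected and every edge is a bridge. -/
def IsTreeG (G : SGraph V) : Prop := ConnectedG G ∧ ∀ u v, G.adj u v → IsBridge G u v

/-- `(u, v)` is an edge of the cycle `cyc`. -/
def CycleEdge {L : ℕ} (cyc : ZMod (2 * L) → V) (u v : V) : Prop :=
  ∃ t, (u = cyc t ∧ v = cyc (t + 1)) ∨ (v = cyc t ∧ u = cyc (t + 1))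

/-- The distance from a node to the cycle. -/
noncomputable def distToCycle (G : SGraph V) {L : ℕ} (cyc : ZMod (2 * L) → V)
    (n : V) : ℕ :=
  sInf {d | ∃ t, WalkLen G n (cyc t) d}

/-- A chestnut with distinguished cycle `cyc` of even length `2L`: an
indecomposable soliton graph consisting of a single cycle of even length
together with paths leading into it, such that entry points of different paths
(nodes of degree 3 on the cycle) are at even distance along the cycle, and paths
leading to the cycle meet (at nodes of degree 3 off the cycle) only at even
distance from their entry into the cycle. -/
def IsChestnutWith (G : SGraph V) (w : V → V → ℕ) (L : ℕ)
    (cyc : ZMod (2 * L) → V) : Prop :=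
  IsSolitonGraph G w ∧ Indecomposable G w ∧ 2 ≤ L ∧
  Function.Injective cyc ∧ (∀ t, G.adj (cyc t) (cyc (t + 1))) ∧ ConnectedG G ∧
  (∀ u v, G.adj u v → ¬ CycleEdge cyc u v → IsBridge G u v) ∧
  (∀ s t : ZMod (2 * L), degree G (cyc s) = 3 → degree G (cyc t) = 3 →
    ∃ d, t = s + 2 * d) ∧
  (∀ n, (∀ t, n ≠ cyc t) → degree G n = 3 → Even (distToCycle G cyc n))

/-- A chestnut. -/
def IsChestnut (G : SGraph V) (w : V → V → ℕ) : Prop :=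
  ∃ (L : ℕ) (cyc : ZMod (2 * L) → V), IsChestnutWith G w L cyc

/-- The burst `(x, y)⊥` of length 1. -/
def singleBurst (x y : V) : Burst V :=
  { m := 1, hm := one_pos, entry := fun _ => x, exit := fun _ => y,
    delay := fun _ => 0, delay_zero := rfl }

/-- The burst `(e, e)‖₁(e, e)⊥` of length 2: two solitons enter and exit at `e`,
the second entering one time step after the first. -/
def doubleBurst (e : V) : Burst V :=
  { m := 2, hm := two_pos, entry := fun _ => e, exit := fun _ => e,
    delay := fun i => if (i : ℕ) = 0 then 0 else 1, delay_zero := rfl }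

/-! ### Auxiliary lemmas for Statement 4 -/

open Classical in
lemma degree_eq_card_filter [Finite V] (G : SGraph V) (n : V) :
    haveI := Fintype.ofFinite V
    degree G n = (Finset.univ.filter (fun v => G.adj n v)).card := by
  letI := Fintype.ofFinite V
  rw [degree, Nat.card_eq_fintype_card, Fintype.card_subtype]

open Classical in
lemma deg2_enum [Finite V] (G : SGraph V) {n a b : V} (hdeg : degree G n = 2)
    (ha : G.adj n a) (hb : G.adj n b) (hab : a ≠ b) :
    ∀ x, G.adj n x → x = a ∨ x = b := by
  letI := Fintype.ofFinite V
  intro x hx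
  by_contra hcon
  push_neg at hcon
  rw [degree_eq_card_filter] at hdeg
  have hsub : ({a, b, x} : Finset V) ⊆ Finset.univ.filter (fun v => G.adj n v) := by
    intro y hy
    simp only [Finset.mem_insert, Finset.mem_singleton] at hy
    rcases hy with rfl | rfl | rfl <;> simp [ha, hb, hx]
  have h1 : a ∉ ({b, x} : Finset V) := by
    simp only [Finset.mem_insert, Finset.mem_singleton]
    push_neg
    exact ⟨hab, fun h => hcon.1 h.symm⟩
  have h2 : b ∉ ({x} : Finset V) := by
    simp only [Finset.mem_singleton]
    exact fun h => hcon.2 h.symm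
  have hcard : ({a, b, x} : Finset V).card = 3 := by
    rw [Finset.card_insert_of_notMem h1, Finset.card_insert_of_notMem h2]
    simp
  have := Finset.card_le_card hsub
  omega

open Classical in
lemma deg_ge_two [Finite V] (G : SGraph V) {n a b : V}
    (ha : G.adj n a) (hb : G.adj n b) (hab : a ≠ b) : 2 ≤ degree G n := by
  letI := Fintype.ofFinite V
  rw [degree_eq_card_filter]
  have hsub : ({a, b} : Finset V) ⊆ Finset.univ.filter (fun v => G.adj n v) := by
    intro y hy
    simp only [Finset.mem_insert, Finset.mem_singleton] at hy
    rcases hy with rfl | rfl <;> simp [ha, hb]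
  have hcard : ({a, b} : Finset V).card = 2 := by
    rw [Finset.card_insert_of_notMem (by simp [hab])]; simp
  have := Finset.card_le_card hsub
  omega

open Classical in
lemma deg3_extra [Finite V] (G : SGraph V) {n a b : V} (hdeg : degree G n = 3)
    (ha : G.adj n a) (hb : G.adj n b) (hab : a ≠ b) :
    ∃ x, G.adj n x ∧ x ≠ a ∧ x ≠ b := by
  letI := Fintype.ofFinite V
  rw [degree_eq_card_filter] at hdeg
  have hsub : ({a, b} : Finset V) ⊆ Finset.univ.filter (fun v => G.adj n v) := by
    intro y hy
    simp only [Finset.mem_insert, Finset.mem_singleton] at hy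
    rcases hy with rfl | rfl <;> simp [ha, hb]
  have hcard : ({a, b} : Finset V).card = 2 := by
    rw [Finset.card_insert_of_notMem (by simp [hab])]; simp
  have hss : ({a, b} : Finset V) ⊂ Finset.univ.filter (fun v => G.adj n v) := by
    refine Finset.ssubset_iff_of_subset hsub |>.mpr ?_
    by_contra hno
    push_neg at hno
    have := Finset.card_le_card (fun y hy => hno y hy)
    omega
  obtain ⟨x, hx1, hx2⟩ := Finset.exists_of_ssubset hss
  simp only [Finset.mem_filter, Finset.mem_univ, true_and] at hx1
  simp only [Finset.mem_insert, Finset.mem_singleton] at hx2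
  push_neg at hx2
  exact ⟨x, hx1, hx2.1, hx2.2⟩

lemma nodeWeight_two [Finite V] {G : SGraph V} {w : V → V → ℕ} (hw : IsWeighting G w)
    {n a b : V} (henum : ∀ x, G.adj n x → x = a ∨ x = b)
    (hab : a ≠ b) : nodeWeight w n = w n a + w n b := by
  classical
  letI := Fintype.ofFinite V
  rw [nodeWeight, finsum_eq_sum_of_fintype]
  rw [← Finset.sum_subset (Finset.subset_univ ({a, b} : Finset V))]
  · rw [Finset.sum_pair hab]
  · intro x _ hx
    simp only [Finset.mem_insert, Finset.mem_singleton] at hx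
    push_neg at hx
    refine hw.2.2 n x (fun hadj => ?_)
    rcases henum x hadj with rfl | rfl
    · exact hx.1 rfl
    · exact hx.2 rfl

lemma nodeWeight_three [Finite V] {G : SGraph V} {w : V → V → ℕ} (hw : IsWeighting G w)
    {n a b c : V} (henum : ∀ x, G.adj n x → x = a ∨ x = b ∨ x = c)
    (hab : a ≠ b) (hac : a ≠ c) (hbc : b ≠ c) :
    nodeWeight w n = w n a + w n b + w n c := by
  classical
  letI := Fintype.ofFinite V
  rw [nodeWeight, finsum_eq_sum_of_fintype]
  rw [← Finset.sum_subset (Finset.subset_univ ({a, b, c} : Finset V))]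
  · rw [Finset.sum_insert (by simp [hab, hac]), Finset.sum_pair hbc, add_assoc]
  · intro x _ hx
    simp only [Finset.mem_insert, Finset.mem_singleton] at hx
    push_neg at hx
    refine hw.2.2 n x (fun hadj => ?_)
    rcases henum x hadj with rfl | rfl | rfl
    · exact hx.1 rfl
    · exact hx.2.1 rfl
    · exact hx.2.2 rfl

lemma walk_prepend {G : SGraph V} {u v x : V} {n : ℕ} (h : G.adj u v)
    (hw : WalkLen G v x n) : WalkLen G u x (n + 1) := by
  induction hw with
  | refl => exact WalkLen.tail (WalkLen.refl u) h
  | tail hw hadj ih => exact WalkLen.tail ih hadj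

lemma walk_zero {G : SGraph V} {u x : V} (h : WalkLen G u x 0) : u = x := by
  cases h; rfl

lemma walk_succ_inv {G : SGraph V} {u x : V} {n : ℕ} (h : WalkLen G u x (n + 1)) :
    ∃ v, G.adj u v ∧ WalkLen G v x n := by
  induction n generalizing x with
  | zero =>
    cases h with
    | tail hw hadj =>
      have := walk_zero hw
      subst this
      exact ⟨x, hadj, WalkLen.refl x⟩
  | succ k ih =>
    cases h with
    | tail hw hadj =>
      obtain ⟨v, hv, hwalk⟩ := ih hw
      exact ⟨v, hv, WalkLen.tail hwalk hadj⟩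

lemma rtg_to_walk {G : SGraph V} {u x : V} (h : Relation.ReflTransGen G.adj u x) :
    ∃ n, WalkLen G u x n := by
  induction h with
  | refl => exact ⟨0, WalkLen.refl u⟩
  | tail _ hadj ih => obtain ⟨n, hn⟩ := ih; exact ⟨n + 1, WalkLen.tail hn hadj⟩

section DistLemmas

variable {G : SGraph V} {L : ℕ} {cyc : ZMod (2 * L) → V}

lemma dtc_set_nonempty (hconn : ConnectedG G) (n : V) :
    {d | ∃ t, WalkLen G n (cyc t) d}.Nonempty := by
  obtain ⟨d, hd⟩ := rtg_to_walk (hconn n (cyc 0))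
  exact ⟨d, 0, hd⟩

lemma dtc_cyc (hconn : ConnectedG G) (t : ZMod (2 * L)) :
    distToCycle G cyc (cyc t) = 0 :=
  Nat.eq_zero_of_le_zero (Nat.sInf_le ⟨t, WalkLen.refl _⟩)

lemma dtc_eq_zero (hconn : ConnectedG G) {n : V} (h : distToCycle G cyc n = 0) :
    ∃ t, n = cyc t := by
  have := Nat.sInf_mem (dtc_set_nonempty (cyc := cyc) hconn n)
  rw [distToCycle] at h
  rw [h] at this
  obtain ⟨t, ht⟩ := this
  exact ⟨t, walk_zero ht⟩

lemma dtc_off_cycle (hconn : ConnectedG G) {n : V} (h : 1 ≤ distToCycle G cyc n) :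
    ∀ t, n ≠ cyc t := by
  intro t hn
  rw [hn, dtc_cyc hconn] at h
  omega

lemma dtc_le_adj (hconn : ConnectedG G) {n n' : V} (h : G.adj n n') :
    distToCycle G cyc n ≤ distToCycle G cyc n' + 1 := by
  have := Nat.sInf_mem (dtc_set_nonempty (cyc := cyc) hconn n')
  obtain ⟨t, ht⟩ := this
  exact Nat.sInf_le ⟨t, walk_prepend h ht⟩

lemma dtc_step (hconn : ConnectedG G) {n : V} {k : ℕ}
    (h : distToCycle G cyc n = k + 1) :
    ∃ n', G.adj n n' ∧ distToCycle G cyc n' = k := by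
  have hmem : (k + 1) ∈ {d | ∃ t, WalkLen G n (cyc t) d} := by
    rw [← h]
    exact Nat.sInf_mem (dtc_set_nonempty (cyc := cyc) hconn n)
  obtain ⟨t, ht⟩ := hmem
  obtain ⟨n', hadj, hwalk⟩ := walk_succ_inv ht
  refine ⟨n', hadj, le_antisymm (Nat.sInf_le ⟨t, hwalk⟩) ?_⟩
  have h2 := dtc_le_adj (cyc := cyc) hconn hadj
  omega

lemma exists_path_to_cycle (hconn : ConnectedG G) (n : V) (k : ℕ)
    (hk : distToCycle G cyc n = k) :
    ∃ v : ℕ → V, v k = n ∧ (∃ s, v 0 = cyc s) ∧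
      (∀ i, i < k → G.adj (v (i + 1)) (v i)) ∧
      (∀ i, i ≤ k → distToCycle G cyc (v i) = i) := by
  induction k generalizing n with
  | zero =>
    obtain ⟨t, ht⟩ := dtc_eq_zero hconn hk
    refine ⟨fun _ => n, rfl, ⟨t, ht⟩, fun i hi => absurd hi (by omega), ?_⟩
    intro i hi
    rw [Nat.le_zero] at hi
    rw [hi, hk]
  | succ k ih =>
    obtain ⟨n', hadj, hn'⟩ := dtc_step hconn hk
    obtain ⟨v', hv'k, hv'0, hv'adj, hv'dist⟩ := ih n' hn'
    refine ⟨fun i => if i = k + 1 then n else v' i, by simp, ?_, ?_, ?_⟩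
    · simpa [Nat.succ_ne_zero] using hv'0
    · intro i hi
      by_cases hik : i = k
      · subst hik
        show G.adj (if i + 1 = i + 1 then n else v' (i + 1)) (if i = i + 1 then n else v' i)
        rw [if_pos rfl, if_neg (by omega : ¬ i = i + 1), hv'k]
        exact hadj
      · simp only [if_neg (by omega : i + 1 ≠ k + 1), if_neg (by omega : i ≠ k + 1)]
        exact hv'adj i (by omega)
    · intro i hi
      by_cases hik : i = k + 1
      · subst hik; simpa using hk
      · simp only [if_neg hik]
        exact hv'dist i (by omega)

end DistLemmas

open Classical in
lemma deg3_enum [Finite V] (G : SGraph V) {n a b c : V} (hdeg : degree G n = 3)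
    (ha : G.adj n a) (hb : G.adj n b) (hc : G.adj n c)
    (hab : a ≠ b) (hac : a ≠ c) (hbc : b ≠ c) :
    ∀ x, G.adj n x → x = a ∨ x = b ∨ x = c := by
  letI := Fintype.ofFinite V
  intro x hx
  by_contra hcon
  push_neg at hcon
  rw [degree_eq_card_filter] at hdeg
  have hsub : ({a, b, c, x} : Finset V) ⊆ Finset.univ.filter (fun v => G.adj n v) := by
    intro y hy
    simp only [Finset.mem_insert, Finset.mem_singleton] at hy
    rcases hy with rfl | rfl | rfl | rfl <;> simp [ha, hb, hc, hx]
  have h3 : c ∉ ({x} : Finset V) := by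
    simp only [Finset.mem_singleton]; exact fun h => hcon.2.2 h.symm
  have h2 : b ∉ ({c, x} : Finset V) := by
    simp only [Finset.mem_insert, Finset.mem_singleton]; push_neg
    exact ⟨hbc, fun h => hcon.2.1 h.symm⟩
  have h1 : a ∉ ({b, c, x} : Finset V) := by
    simp only [Finset.mem_insert, Finset.mem_singleton]; push_neg
    exact ⟨hab, hac, fun h => hcon.1 h.symm⟩
  have hcard : ({a, b, c, x} : Finset V).card = 4 := by
    rw [Finset.card_insert_of_notMem h1, Finset.card_insert_of_notMem h2,
      Finset.card_insert_of_notMem h3]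
    simp
  have := Finset.card_le_card hsub
  omega

section CycleLemmas

variable [Finite V] {G : SGraph V} {w : V → V → ℕ} {L : ℕ} {cyc : ZMod (2 * L) → V}

/-- Assumptions bundle used for the cycle computations. -/
structure CycCtx (G : SGraph V) (w : V → V → ℕ) (L : ℕ) (cyc : ZMod (2 * L) → V) : Prop where
  hw : IsWeighting G w
  hdeg13 : ∀ n, 1 ≤ degree G n ∧ degree G n ≤ 3
  hint : ∀ n, Interior G n → nodeWeight w n = degree G n + 1
  hL : 2 ≤ L
  hinj : Function.Injective cyc
  hadjc : ∀ t, G.adj (cyc t) (cyc (t + 1))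
  hevenc : ∀ s t : ZMod (2 * L), degree G (cyc s) = 3 → degree G (cyc t) = 3 →
    ∃ d, t = s + 2 * d

namespace CycCtx

variable (hc : CycCtx G w L cyc)
include hc

lemma two_ne : (2 : ZMod (2 * L)) ≠ 0 := by
  have hL := hc.hL
  haveI : NeZero (2 * L) := ⟨by omega⟩
  have h2 : ((2 : ℕ) : ZMod (2 * L)) ≠ 0 := by
    intro h
    have := (ZMod.natCast_eq_zero_iff 2 (2 * L)).mp h
    have := Nat.le_of_dvd (by omega) this
    omega
  simpa using h2

lemma one_ne : (1 : ZMod (2 * L)) ≠ 0 := by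
  have hL := hc.hL
  haveI : NeZero (2 * L) := ⟨by omega⟩
  have h1 : ((1 : ℕ) : ZMod (2 * L)) ≠ 0 := by
    intro h
    have := (ZMod.natCast_eq_zero_iff 1 (2 * L)).mp h
    have := Nat.le_of_dvd (by omega) this
    omega
  simpa using h1

lemma cyc_succ_ne (t : ZMod (2 * L)) : cyc (t + 1) ≠ cyc t := by
  intro h
  have := hc.hinj h
  have h1 := hc.one_ne
  apply h1
  linear_combination this

lemma cyc_pm_ne (t : ZMod (2 * L)) : cyc (t + 1) ≠ cyc (t - 1) := by
  intro h
  have := hc.hinj h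
  apply hc.two_ne
  linear_combination this

lemma adj_pred (t : ZMod (2 * L)) : G.adj (cyc t) (cyc (t - 1)) := by
  have := hc.hadjc (t - 1)
  rw [sub_add_cancel] at this
  exact G.symm _ _ this

lemma deg_cyc (t : ZMod (2 * L)) : degree G (cyc t) = 2 ∨ degree G (cyc t) = 3 := by
  have h2 : 2 ≤ degree G (cyc t) :=
    deg_ge_two G (hc.hadjc t) (hc.adj_pred t)
      (fun h => hc.cyc_pm_ne t (by rw [h]))
  have := (hc.hdeg13 (cyc t)).2
  omega

lemma w12 {a b : V} (h : G.adj a b) : w a b = 1 ∨ w a b = 2 := hc.hw.2.1 a b h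

lemma deg3_extra' (t : ZMod (2 * L)) (hdeg : degree G (cyc t) = 3) :
    ∃ x, G.adj (cyc t) x ∧ x ≠ cyc (t + 1) ∧ x ≠ cyc (t - 1) :=
  deg3_extra G hdeg (hc.hadjc t) (hc.adj_pred t)
    (fun h => hc.cyc_pm_ne t (by rw [h]))

lemma pairsum (t : ZMod (2 * L)) :
    (w (cyc (t - 1)) (cyc t) + w (cyc t) (cyc (t + 1)) = 3) ∨
    (w (cyc (t - 1)) (cyc t) + w (cyc t) (cyc (t + 1)) = 2 ∧
      degree G (cyc t) = 3) := by
  have hadj1 : G.adj (cyc t) (cyc (t + 1)) := hc.hadjc t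
  have hadj2 : G.adj (cyc t) (cyc (t - 1)) := hc.adj_pred t
  have hne : cyc (t + 1) ≠ cyc (t - 1) := hc.cyc_pm_ne t
  have hInt : Interior G (cyc t) :=
    deg_ge_two G hadj1 hadj2 (fun h => hne (by rw [h]))
  have hNW := hc.hint _ hInt
  have hsymm := hc.hw.1
  rcases hc.deg_cyc t with hdeg | hdeg
  · left
    have henum := deg2_enum G hdeg hadj1 hadj2 (fun h => hne (by rw [h]))
    have := nodeWeight_two hc.hw henum (fun h => hne (by rw [h]))
    rw [hdeg] at hNW
    rw [hsymm (cyc (t-1)) (cyc t)]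
    omega
  · obtain ⟨x, hxadj, hx1, hx2⟩ := hc.deg3_extra' t hdeg
    have henum := deg3_enum G hdeg hadj1 hadj2 hxadj
      (fun h => hne (by rw [h])) (Ne.symm hx1) (Ne.symm hx2)
    have hnw3 := nodeWeight_three hc.hw henum
      (fun h => hne (by rw [h])) (Ne.symm hx1) (Ne.symm hx2)
    rw [hdeg] at hNW
    have hx12 := hc.w12 hxadj
    have h1 := hc.w12 hadj1
    have h2 := hc.w12 hadj2
    rw [hsymm (cyc (t-1)) (cyc t)]
    omega

open Classical in
lemma cycle_alt :
    ∀ t, w (cyc (t - 1)) (cyc t) + w (cyc t) (cyc (t + 1)) = 3 := by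
  have hL := hc.hL
  haveI : NeZero (2 * L) := ⟨by omega⟩
  set E : ZMod (2 * L) → ℕ := fun t => w (cyc t) (cyc (t + 1)) with hE
  have hE12 : ∀ t, E t = 1 ∨ E t = 2 := fun t => hc.w12 (hc.hadjc t)
  have hEpair : ∀ t, (E (t - 1) + E t = 3) ∨
      (E (t - 1) + E t = 2 ∧ degree G (cyc t) = 3) := by
    intro t
    have := hc.pairsum t
    have harg : (t - 1) + 1 = t := by ring
    simp only [hE, harg]
    exact this
  -- the set of defects
  set D : Finset (ZMod (2 * L)) :=
      Finset.univ.filter (fun t => E (t - 1) + E t = 2) with hD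
  -- it suffices to show D = ∅
  suffices hDe : D = ∅ by
    intro t
    rcases hEpair t with h | ⟨h2, _⟩
    · have harg : (t - 1) + 1 = t := by ring
      simpa only [hE, harg] using h
    · exfalso
      have : t ∈ D := by simp [hD, h2]
      rw [hDe] at this
      simp at this
  -- parity of the number of defects
  have hcardD : Even D.card := by
    have hsum1 : ∑ t, E (t - 1) = ∑ t, E t :=
      Fintype.sum_equiv (Equiv.subRight (1 : ZMod (2 * L))) _ _ (fun t => rfl)
    have hsum2 : ∑ t, (E (t - 1) + E t) = 2 * ∑ t, E t := by
      rw [Finset.sum_add_distrib, hsum1]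
      ring
    have hsplit := Finset.sum_filter_add_sum_filter_not Finset.univ
      (fun t => E (t - 1) + E t = 2) (fun t => E (t - 1) + E t)
    have hvalD : ∑ t ∈ Finset.univ.filter (fun t => E (t - 1) + E t = 2),
        (E (t - 1) + E t) = 2 * D.card := by
      rw [Finset.sum_congr rfl (fun t ht => (Finset.mem_filter.mp ht).2)]
      simp [hD, mul_comm]
    have hvalN : ∑ t ∈ Finset.univ.filter (fun t => ¬ (E (t - 1) + E t = 2)),
        (E (t - 1) + E t) = 3 * (Finset.univ.filter
          (fun t => ¬ (E (t - 1) + E t = 2))).card := by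
      have h3 : ∀ t ∈ Finset.univ.filter (fun t => ¬ (E (t - 1) + E t = 2)),
          E (t - 1) + E t = 3 := by
        intro t ht
        have hmem := Finset.mem_filter.mp ht
        rcases hEpair t with h | ⟨h2, _⟩
        · exact h
        · exact absurd h2 hmem.2
      rw [Finset.sum_congr rfl h3, Finset.sum_const, smul_eq_mul, mul_comm]
    have hcards : D.card + (Finset.univ.filter
        (fun t => ¬ (E (t - 1) + E t = 2))).card = 2 * L := by
      rw [hD, Finset.card_filter_add_card_filter_not]
      simp [ZMod.card]
    rw [hvalD, hvalN] at hsplit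
    rw [hsum2] at hsplit
    rw [Nat.even_iff]
    omega
  -- no defects
  by_contra hne
  obtain ⟨p, hp⟩ := Finset.nonempty_of_ne_empty hne
  have hpD : E (p - 1) + E p = 2 := (Finset.mem_filter.mp hp).2
  have hQex : ∃ j : ℕ, E (p + ((j + 1 : ℕ) : ZMod (2 * L)) - 1)
      + E (p + ((j + 1 : ℕ) : ZMod (2 * L))) = 2 := by
    refine ⟨2 * L - 1, ?_⟩
    have : ((2 * L - 1 + 1 : ℕ) : ZMod (2 * L)) = 0 := by
      have h1 : (2 * L - 1 + 1 : ℕ) = 2 * L := by omega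
      rw [h1]
      exact ZMod.natCast_self (2 * L)
    rw [this, add_zero]
    exact hpD
  set J : ℕ := Nat.find hQex + 1 with hJ
  have hJspec : E (p + (J : ℕ) - 1) + E (p + (J : ℕ)) = 2 := Nat.find_spec hQex
  have hJle : J ≤ 2 * L := by
    have : Nat.find hQex ≤ 2 * L - 1 := Nat.find_min' hQex (by
      have : ((2 * L - 1 + 1 : ℕ) : ZMod (2 * L)) = 0 := by
        have h1 : (2 * L - 1 + 1 : ℕ) = 2 * L := by omega
        rw [h1]
        exact ZMod.natCast_self (2 * L)
      rw [this, add_zero]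
      exact hpD)
    omega
  -- alternation below J
  have hclaim : ∀ k, k < J → E (p + (k : ℕ)) = if Even k then 1 else 2 := by
    intro k
    induction k with
    | zero =>
      intro _
      have h1 := hE12 (p - 1)
      have h2 := hE12 p
      simp only [Nat.cast_zero, add_zero, if_pos (Even.zero)]
      omega
    | succ k ih =>
      intro hk1
      have hknd : ¬ (E (p + ((k + 1 : ℕ) : ZMod (2 * L)) - 1)
          + E (p + ((k + 1 : ℕ) : ZMod (2 * L))) = 2) :=
        Nat.find_min hQex (by omega)
      have harg : p + ((k + 1 : ℕ) : ZMod (2 * L)) - 1 = p + (k : ℕ) := by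
        push_cast
        ring
      rcases hEpair (p + ((k + 1 : ℕ) : ZMod (2 * L))) with h | ⟨h2, _⟩
      · rw [harg] at h
        have hih := ih (by omega)
        by_cases hek : Even k
        · rw [if_neg (by simp [Nat.even_add_one, hek])]
          rw [if_pos hek] at hih
          omega
        · rw [if_pos (by simp [Nat.even_add_one, hek])]
          rw [if_neg hek] at hih
          omega
      · exact absurd h2 hknd
  -- J is odd
  have hJodd : ¬ Even J := by
    have harg : p + (J : ℕ) - 1 = p + ((J - 1 : ℕ) : ZMod (2 * L)) := by
      have : (J : ℕ) = ((J - 1 : ℕ) + 1 : ℕ) := by omega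
      rw [this]
      push_cast
      ring
    rw [harg] at hJspec
    have hcl := hclaim (J - 1) (by omega)
    have h2 := hE12 (p + ((J : ℕ) : ZMod (2 * L)))
    by_cases hev : Even (J - 1)
    · rw [if_pos hev] at hcl
      intro hevJ
      rw [Nat.even_iff] at hev hevJ
      omega
    · rw [if_neg hev] at hcl
      omega
  -- both endpoints have degree 3
  have hdeg_p : degree G (cyc p) = 3 := by
    rcases hEpair p with h | ⟨_, h3⟩
    · omega
    · exact h3
  have hdeg_pJ : degree G (cyc (p + (J : ℕ))) = 3 := by
    rcases hEpair (p + (J : ℕ)) with h | ⟨_, h3⟩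
    · omega
    · exact h3
  -- even spacing gives contradiction
  obtain ⟨d, hd⟩ := hc.hevenc p (p + (J : ℕ)) hdeg_p hdeg_pJ
  have hJd : ((J : ℕ) : ZMod (2 * L)) = 2 * d := by
    have := hd
    rwa [add_right_inj] at this
  rcases Nat.lt_or_ge J (2 * L) with hJlt | hJge
  · have hval : ((J : ℕ) : ZMod (2 * L)).val = J := ZMod.val_natCast_of_lt hJlt
    have hdv : ((d.val : ℕ) : ZMod (2 * L)) = d := ZMod.natCast_rightInverse d
    have h2d : ((2 * d.val : ℕ) : ZMod (2 * L)) = 2 * d := by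
      push_cast
      rw [hdv]
    have : J = (2 * d.val) % (2 * L) := by
      rw [← hval, hJd, ← h2d, ZMod.val_natCast]
    rw [Nat.mul_mod_mul_left] at this
    exact hJodd ⟨d.val % L, by omega⟩
  · have hJeq : J = 2 * L := by omega
    exact hJodd ⟨L, by omega⟩

/-- The directed traversal of the cycle starting at `cyc s` in the direction of
the weight-2 cycle edge at `cyc s`. -/
lemma exists_C (s : ZMod (2 * L)) : ∃ C : ℕ → V,
    (C 0 = cyc s) ∧
    (∀ r : ℕ, G.adj (C r) (C (r + 1))) ∧
    (w (C 0) (C 1) = 2) ∧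
    (∀ r : ℕ, w (C r) (C (r + 1)) + w (C (r + 1)) (C (r + 2)) = 3) ∧
    (∀ r : ℕ, ∃ t, C r = cyc t) ∧
    (C (2 * L) = C 0) ∧
    (∀ r : ℕ, C (r + 1) ≠ C r) ∧
    (∀ r : ℕ, C (r + 2) ≠ C r) ∧
    (∀ r r' : ℕ, r < 2 * L → r' < 2 * L →
      ((C r = C r' ∧ C (r + 1) = C (r' + 1)) ∨
        (C r = C (r' + 1) ∧ C (r + 1) = C r')) → r = r') ∧
    (∀ t : ZMod (2 * L), ∃! r : ℕ, r < 2 * L ∧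
      ((C r = cyc t ∧ C (r + 1) = cyc (t + 1)) ∨
        (C r = cyc (t + 1) ∧ C (r + 1) = cyc t))) := by
  have hL := hc.hL
  haveI : NeZero (2 * L) := ⟨by omega⟩
  have halt := hc.cycle_alt
  have hsymm := hc.hw.1
  have h1 := hc.w12 (hc.hadjc s)
  have h2 := hc.w12 (hc.adj_pred s)
  have hcast : ∀ r : ℕ, ((r + 1 : ℕ) : ZMod (2 * L)) = (r : ZMod (2 * L)) + 1 := by
    intro r; push_cast; ring
  by_cases hdir : w (cyc s) (cyc (s + 1)) = 2
  · refine ⟨fun r => cyc (s + (r : ℕ)), by simp, ?_, ?_, ?_, fun r => ⟨_, rfl⟩, ?_, ?_, ?_, ?_, ?_⟩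
    · intro r
      dsimp only
      rw [hcast r, ← add_assoc]
      exact hc.hadjc (s + (r : ℕ))
    · dsimp only
      simpa using hdir
    · intro r
      dsimp only
      have e1 : s + ((r + 1 : ℕ) : ZMod (2 * L)) = s + (r : ℕ) + 1 := by
        push_cast; ring
      have e2 : s + ((r + 2 : ℕ) : ZMod (2 * L)) = s + (r : ℕ) + 1 + 1 := by
        push_cast; ring
      rw [e1, e2]
      have := halt (s + (r : ℕ) + 1)
      have harg : s + (r : ℕ) + 1 - 1 = s + (r : ℕ) := by ring
      rw [harg] at this
      exact this
    · dsimp only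
      rw [ZMod.natCast_self, add_zero, Nat.cast_zero, add_zero]
    · intro r heq
      have := hc.hinj heq
      apply hc.one_ne
      rw [hcast r] at this
      linear_combination this
    · intro r heq
      have := hc.hinj heq
      apply hc.two_ne
      have h2cast : ((r + 2 : ℕ) : ZMod (2 * L)) = (r : ZMod (2 * L)) + 2 := by
        push_cast; ring
      rw [h2cast] at this
      linear_combination this
    · intro r r' hr hr' hcase
      have hinjC : ∀ x y : ℕ, x < 2 * L → y < 2 * L →
          cyc (s + (x : ZMod (2 * L))) = cyc (s + (y : ZMod (2 * L))) → x = y := by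
        intro x y hx hy hxy
        have := hc.hinj hxy
        have hxy2 : ((x : ℕ) : ZMod (2 * L)) = ((y : ℕ) : ZMod (2 * L)) := by
          linear_combination this
        have := congrArg ZMod.val hxy2
        rwa [ZMod.val_natCast_of_lt hx, ZMod.val_natCast_of_lt hy] at this
      rcases hcase with ⟨e1, _⟩ | ⟨e1, e2⟩
      · exact hinjC r r' hr hr' e1
      · exfalso
        dsimp only at e1 e2
        have f1 := hc.hinj e1
        have f2 := hc.hinj e2
        rw [hcast] at f1 f2
        apply hc.two_ne
        linear_combination f2 - f1
    · intro t
      refine ⟨(t - s).val, ⟨ZMod.val_lt _, Or.inl ⟨?_, ?_⟩⟩, ?_⟩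
      · dsimp only
        rw [ZMod.natCast_rightInverse (t - s)]
        congr 1
        ring
      · dsimp only
        rw [hcast, ZMod.natCast_rightInverse (t - s)]
        congr 1
        ring
      · rintro r' ⟨hr'lt, hcase | hcase⟩
        · have := hc.hinj hcase.1
          have hr' : (r' : ZMod (2 * L)) = t - s := by linear_combination this
          rw [← hr', ZMod.val_natCast_of_lt hr'lt]
        · exfalso
          have e1 := hc.hinj hcase.1
          have e2 := hc.hinj hcase.2
          rw [hcast] at e2
          apply hc.two_ne
          linear_combination e2 - e1
  · have hdir2 : w (cyc s) (cyc (s - 1)) = 2 := by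
      have := halt s
      rw [hsymm (cyc (s - 1)) (cyc s)] at this
      omega
    refine ⟨fun r => cyc (s - (r : ℕ)), by simp, ?_, ?_, ?_, fun r => ⟨_, rfl⟩, ?_, ?_, ?_, ?_, ?_⟩
    · intro r
      have harg : s - ((r + 1 : ℕ) : ZMod (2 * L)) = (s - (r : ℕ)) - 1 := by
        rw [hcast]; ring
      dsimp only
      rw [harg]
      exact hc.adj_pred (s - (r : ℕ))
    · have harg : s - ((1 : ℕ) : ZMod (2 * L)) = s - 1 := by push_cast; ring
      dsimp only
      rw [Nat.cast_zero, sub_zero, harg]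
      exact hdir2
    · intro r
      have harg1 : s - ((r + 1 : ℕ) : ZMod (2 * L)) = (s - (r : ℕ)) - 1 := by
        rw [hcast]; ring
      have harg2 : s - ((r + 2 : ℕ) : ZMod (2 * L)) = (s - (r : ℕ)) - 2 := by
        push_cast; ring
      dsimp only
      rw [harg1, harg2]
      have := halt ((s - (r : ℕ)) - 1)
      have ha : (s - (r : ℕ)) - 1 - 1 = (s - (r : ℕ)) - 2 := by ring
      have hb : (s - (r : ℕ)) - 1 + 1 = s - (r : ℕ) := by ring
      rw [ha, hb] at this
      rw [hsymm (cyc (s - (r:ℕ))) (cyc (s - (r:ℕ) - 1))]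
      rw [hsymm (cyc (s - (r:ℕ) - 1)) (cyc (s - (r:ℕ) - 2))]
      omega
    · dsimp only
      rw [show (((2 * L : ℕ)) : ZMod (2 * L)) = 0 from ZMod.natCast_self (2 * L)]
      rw [sub_zero, Nat.cast_zero, sub_zero]
    · intro r heq
      have := hc.hinj heq
      apply hc.one_ne
      rw [hcast r] at this
      linear_combination -this
    · intro r heq
      have := hc.hinj heq
      apply hc.two_ne
      have h2cast : ((r + 2 : ℕ) : ZMod (2 * L)) = (r : ZMod (2 * L)) + 2 := by
        push_cast; ring
      rw [h2cast] at this
      linear_combination -this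
    · intro r r' hr hr' hcase
      have hinjC : ∀ x y : ℕ, x < 2 * L → y < 2 * L →
          cyc (s - (x : ZMod (2 * L))) = cyc (s - (y : ZMod (2 * L))) → x = y := by
        intro x y hx hy hxy
        have := hc.hinj hxy
        have hxy2 : ((x : ℕ) : ZMod (2 * L)) = ((y : ℕ) : ZMod (2 * L)) := by
          linear_combination -this
        have := congrArg ZMod.val hxy2
        rwa [ZMod.val_natCast_of_lt hx, ZMod.val_natCast_of_lt hy] at this
      rcases hcase with ⟨e1, _⟩ | ⟨e1, e2⟩
      · exact hinjC r r' hr hr' e1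
      · exfalso
        dsimp only at e1 e2
        have f1 := hc.hinj e1
        have f2 := hc.hinj e2
        rw [hcast] at f1 f2
        apply hc.two_ne
        linear_combination f1 - f2
    · intro t
      refine ⟨(s - (t + 1)).val, ⟨ZMod.val_lt _, Or.inr ⟨?_, ?_⟩⟩, ?_⟩
      · dsimp only
        rw [ZMod.natCast_rightInverse (s - (t + 1))]
        congr 1
        ring
      · dsimp only
        rw [hcast, ZMod.natCast_rightInverse (s - (t + 1))]
        congr 1
        ring
      · rintro r' ⟨hr'lt, hcase | hcase⟩
        · exfalso
          have e1 := hc.hinj hcase.1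
          have e2 := hc.hinj hcase.2
          rw [hcast] at e2
          apply hc.two_ne
          linear_combination e1 - e2
        · have := hc.hinj hcase.1
          have hr' : (r' : ZMod (2 * L)) = s - (t + 1) := by linear_combination -this
          rw [← hr', ZMod.val_natCast_of_lt hr'lt]

end CycCtx

end CycleLemmas


set_option maxHeartbeats 2000000

lemma alt_seq {f : ℕ → ℕ} (h0 : f 0 = 2) (hs : ∀ r, f r + f (r + 1) = 3) :
    ∀ r, f r = if Even r then 2 else 1 := by
  intro r
  induction r with
  | zero => simpa using h0
  | succ k ih =>
    have := hs k
    by_cases hk : Even k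
    · rw [if_pos hk] at ih
      rw [if_neg (by simp [Nat.even_add_one, hk])]
      omega
    · rw [if_neg hk] at ih
      rw [if_pos (by simp [Nat.even_add_one, hk])]
      omega

lemma ite_sum12 {a b : ℕ} (h : a + 1 = b ∨ b + 1 = a) :
    (if Even a then 1 else 2) + (if Even b then 1 else 2) = 3 := by
  have h2 : Even a ↔ ¬ Even b := by
    rcases h with h | h
    · subst h; simp [Nat.even_add_one]
    · subst h; simp [Nat.even_add_one]
  by_cases hev : Even a
  · rw [if_pos hev, if_neg (h2.mp hev)]
  · rw [if_neg hev, if_pos (by by_contra hb; exact hev (h2.mpr hb))]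

lemma ite_sum21 {a b : ℕ} (h : a + 1 = b ∨ b + 1 = a) :
    (if Even a then 2 else 1) + (if Even b then 2 else 1) = 3 := by
  have h2 : Even a ↔ ¬ Even b := by
    rcases h with h | h
    · subst h; simp [Nat.even_add_one]
    · subst h; simp [Nat.even_add_one]
  by_cases hev : Even a
  · rw [if_pos hev, if_neg (h2.mp hev)]
  · rw [if_neg hev, if_pos (by by_contra hb; exact hev (h2.mpr hb))]

/-- For a chestnut `G` and an exterior node `e`, there is a total
legal configuration trail for `G` and the burst `(e,e)⊥` in which the soliton
traverses the cycle exactly once (every cycle edge is used exactly once). -/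
theorem chestnut_single_soliton_trail {V : Type} [Finite V]
    (G : SGraph V) (w : V → V → ℕ) (L : ℕ) (cyc : ZMod (2 * L) → V)
    (hch : IsChestnutWith G w L cyc) (e : V) (he : Exterior G e) :
    ∃ (len : ℕ) (cfg : Fin (len + 1) → Config V (singleBurst e e).m),
      IsTotalLegalTrail G w (singleBurst e e) len cfg ∧
      ∀ t : ZMod (2 * L), ∃! j : Fin len, ∃ i : Fin (singleBurst e e).m,
        ((cfg j.castSucc).2 i = SolPos.node (cyc t) ∧
          (cfg j.succ).2 i = SolPos.node (cyc (t + 1))) ∨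
        ((cfg j.castSucc).2 i = SolPos.node (cyc (t + 1)) ∧
          (cfg j.succ).2 i = SolPos.node (cyc t)) := by
  classical
  obtain ⟨hsol, hindec, hL, hinj, hadjc, hconn, hbridge, hevenc, heventree⟩ := hch
  obtain ⟨hw, hdeg13, hext, hint, hcomp⟩ := hsol
  have hc : CycCtx G w L cyc := ⟨hw, hdeg13, hint, hL, hinj, hadjc, hevenc⟩
  have halt := hc.cycle_alt
  have hsymm := hw.1
  have hwle : ∀ a b, w a b ≤ 2 := by
    intro a b
    by_cases h : G.adj a b
    · rcases hw.2.1 a b h with h1 | h1 <;> omega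
    · rw [hw.2.2 a b h]
      omega
  set m := distToCycle G cyc e with hmdef
  have hm1 : 1 ≤ m := by
    by_contra hcon
    have hm0 : m = 0 := by omega
    obtain ⟨t, ht⟩ := dtc_eq_zero hconn hm0
    have h2 : 2 ≤ degree G (cyc t) := by
      rcases hc.deg_cyc t with h | h <;> omega
    rw [← ht] at h2
    rw [Exterior] at he
    omega
  obtain ⟨v, hvm, ⟨s, hv0⟩, hvadj, hvdist⟩ := exists_path_to_cycle hconn e m rfl
  -- injectivity facts for the tree path
  have hvI : ∀ i, i ≤ m → ∀ j, j ≤ m → v i = v j → i = j := by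
    intro i hi j hj hij
    have h1 := hvdist i hi
    have h2 := hvdist j hj
    rw [hij] at h1
    omega
  have hvoff : ∀ i, 1 ≤ i → i ≤ m → ∀ t, v i ≠ cyc t := by
    intro i h1 h2 t
    exact dtc_off_cycle hconn (by rw [hvdist i h2]; omega) t
  -- tree edge weights
  have hW : ∀ i, i + 1 ≤ m → w (v (i + 1)) (v i) = if Even i then 1 else 2 := by
    intro i
    induction i with
    | zero =>
      intro h0
      have hb1 : G.adj (cyc s) (v 1) := by
        rw [← hv0]
        exact G.symm _ _ (hvadj 0 (by omega))
      have hne1 : v 1 ≠ cyc (s + 1) := hvoff 1 le_rfl (by omega) _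
      have hne2 : v 1 ≠ cyc (s - 1) := hvoff 1 le_rfl (by omega) _
      have hpm : cyc (s + 1) ≠ cyc (s - 1) := hc.cyc_pm_ne s
      have hdeg3 : degree G (cyc s) = 3 := by
        rcases hc.deg_cyc s with h2 | h3
        · exfalso
          rcases deg2_enum G h2 (hadjc s) (hc.adj_pred s) hpm (v 1) hb1 with h | h
          · exact hne1 h
          · exact hne2 h
        · exact h3
      have henum := deg3_enum G hdeg3 (hadjc s) (hc.adj_pred s) hb1 hpm
        (Ne.symm hne1) (Ne.symm hne2)
      have hnw := nodeWeight_three hw henum hpm (Ne.symm hne1) (Ne.symm hne2)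
      have hInt : Interior G (cyc s) := by rw [Interior, hdeg3]; omega
      have hval : nodeWeight w (cyc s) = 4 := by rw [hint _ hInt, hdeg3]
      have halts := halt s
      rw [hsymm (cyc (s - 1)) (cyc s)] at halts
      rw [show (0 : ℕ) + 1 = 1 from rfl, hv0, hsymm (v 1) (cyc s),
        if_pos (Even.zero)]
      omega
    | succ i ih =>
      intro h
      show w (v (i + 2)) (v (i + 1)) = if Even (i + 1) then 1 else 2
      have ihv : w (v (i + 1)) (v i) = if Even i then 1 else 2 := ih (by omega)
      have hq1 : G.adj (v (i + 1)) (v i) := hvadj i (by omega)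
      have hq2 : G.adj (v (i + 1)) (v (i + 2)) :=
        G.symm _ _ (hvadj (i + 1) (by omega))
      have hneq : v i ≠ v (i + 2) := by
        intro hcon
        have := hvI i (by omega) (i + 2) (by omega) hcon
        omega
      have hdge2 : 2 ≤ degree G (v (i + 1)) := deg_ge_two G hq1 hq2 hneq
      have hInt : Interior G (v (i + 1)) := hdge2
      have hNW := hint _ hInt
      rw [hsymm (v (i + 2)) (v (i + 1))]
      by_cases hdeg3 : degree G (v (i + 1)) = 3
      · have hEt := heventree (v (i + 1)) (hvoff (i + 1) (by omega) (by omega)) hdeg3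
        rw [hvdist (i + 1) (by omega)] at hEt
        obtain ⟨x, hxadj, hx1, hx2⟩ := deg3_extra G hdeg3 hq1 hq2 hneq
        have henum := deg3_enum G hdeg3 hq1 hq2 hxadj hneq
          (Ne.symm hx1) (Ne.symm hx2)
        have hnw3 := nodeWeight_three hw henum hneq (Ne.symm hx1) (Ne.symm hx2)
        rw [hdeg3] at hNW
        have hx12 := hc.w12 hxadj
        have hodd : ¬ Even i := by
          rw [Nat.even_add_one] at hEt
          exact hEt
        rw [if_neg hodd] at ihv
        rw [if_pos (by rwa [Nat.even_add_one])]
        have hy12 := hc.w12 hq2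
        omega
      · have hdeg2 : degree G (v (i + 1)) = 2 := by
          have := (hdeg13 (v (i + 1))).2
          omega
        have henum := deg2_enum G hdeg2 hq1 hq2 hneq
        have hnw2 := nodeWeight_two hw henum hneq
        rw [hdeg2] at hNW
        by_cases hev : Even i
        · rw [if_pos hev] at ihv
          rw [if_neg (by simp [Nat.even_add_one, hev])]
          omega
        · rw [if_neg hev] at ihv
          rw [if_pos (by simp [Nat.even_add_one, hev])]
          omega
  -- the directed cycle traversal
  obtain ⟨C, hC0, hCadj, hCw2, hCsum, hCcyc, hCper, hCne1, hCne2, hCinj2, hCbij⟩ :=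
    hc.exists_C s
  have hCw : ∀ r, w (C r) (C (r + 1)) = if Even r then 2 else 1 :=
    alt_seq hCw2 hCsum
  have hvC : ∀ i, 1 ≤ i → i ≤ m → ∀ r, v i ≠ C r := by
    intro i h1 h2 r
    obtain ⟨t, ht⟩ := hCcyc r
    rw [ht]
    exact hvoff i h1 h2 t
  -- the walk
  set N : ℕ := 2 * m + 2 * L with hNdef
  set P : ℕ → V := fun j =>
    if j ≤ m then v (m - j) else if j ≤ m + 2 * L then C (j - m)
    else v (j - (m + 2 * L)) with hPdef
  have hP1 : ∀ j, j ≤ m → P j = v (m - j) := by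
    intro j hj
    simp only [hPdef, if_pos hj]
  have hP2 : ∀ r, r ≤ 2 * L → P (m + r) = C r := by
    intro r hr
    rcases Nat.eq_zero_or_pos r with rfl | hrpos
    · rw [add_zero, hP1 m le_rfl, Nat.sub_self, hv0, ← hC0]
    · simp only [hPdef, if_neg (by omega : ¬ m + r ≤ m),
        if_pos (by omega : m + r ≤ m + 2 * L), Nat.add_sub_cancel_left]
  have hP3 : ∀ i, i ≤ m → P (m + 2 * L + i) = v i := by
    intro i hi
    rcases Nat.eq_zero_or_pos i with rfl | hipos
    · rw [add_zero, hP2 (2 * L) le_rfl, hCper, hC0, hv0]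
    · simp only [hPdef, if_neg (by omega : ¬ m + 2 * L + i ≤ m),
        if_neg (by omega : ¬ m + 2 * L + i ≤ m + 2 * L)]
      congr 1
      omega
  -- classification of steps
  have hstep : ∀ k, k < N →
      (k < m ∧ P k = v (m - k) ∧ P (k + 1) = v (m - k - 1)) ∨
      (m ≤ k ∧ k < m + 2 * L ∧ P k = C (k - m) ∧ P (k + 1) = C (k - m + 1)) ∨
      (m + 2 * L ≤ k ∧ k - m - 2 * L + 1 ≤ m ∧
        P k = v (k - m - 2 * L) ∧ P (k + 1) = v (k - m - 2 * L + 1)) := by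
    intro k hk
    rcases Nat.lt_or_ge k m with h1 | h1
    · left
      refine ⟨h1, hP1 k (by omega), ?_⟩
      rw [hP1 (k + 1) (by omega), Nat.sub_sub]
    · rcases Nat.lt_or_ge k (m + 2 * L) with h2 | h2
      · right; left
        refine ⟨h1, h2, ?_, ?_⟩
        · have := hP2 (k - m) (by omega)
          rwa [show m + (k - m) = k from by omega] at this
        · have := hP2 (k - m + 1) (by omega)
          rwa [show m + (k - m + 1) = k + 1 from by omega] at this
      · right; right
        refine ⟨h2, by omega, ?_, ?_⟩
        · have := hP3 (k - m - 2 * L) (by omega)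
          rwa [show m + 2 * L + (k - m - 2 * L) = k from by omega] at this
        · have := hP3 (k - m - 2 * L + 1) (by omega)
          rwa [show m + 2 * L + (k - m - 2 * L + 1) = k + 1 from by omega] at this
  -- adjacency along the walk
  have hPadj : ∀ j, j < N → G.adj (P j) (P (j + 1)) := by
    intro j hj
    rcases hstep j hj with ⟨h1, e1, e2⟩ | ⟨h1, h2, e1, e2⟩ | ⟨h1, h2, e1, e2⟩
    · rw [e1, e2]
      have := hvadj (m - j - 1) (by omega)
      rwa [show m - j - 1 + 1 = m - j from by omega] at this
    · rw [e1, e2]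
      exact hCadj (j - m)
    · rw [e1, e2]
      exact G.symm _ _ (hvadj (j - m - 2 * L) (by omega))
  have hPne1 : ∀ j, j < N → P (j + 1) ≠ P j := by
    intro j hj h
    exact G.loopless (P j) (h ▸ hPadj j hj)
  -- no immediate return
  have hPne2 : ∀ j, j + 2 ≤ N → P (j + 2) ≠ P j := by
    intro j hj hcon
    rw [show j + 2 = j + 1 + 1 from rfl] at hcon
    rcases hstep j (by omega) with ⟨h1, e1, e2⟩ | ⟨h1, h2, e1, e2⟩ | ⟨h1, h2, e1, e2⟩ <;>
      rcases hstep (j + 1) (by omega) with ⟨g1, f1, f2⟩ | ⟨g1, g2, f1, f2⟩ | ⟨g1, g2, f1, f2⟩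
    · rw [f2, e1] at hcon
      have := hvI _ (by omega) _ (by omega) hcon
      omega
    · rw [f2, e1] at hcon
      exact hvC (m - j) (by omega) (by omega) _ hcon.symm
    · omega
    · omega
    · rw [f2, e1] at hcon
      rw [show j + 1 - m + 1 = j - m + 2 from by omega] at hcon
      exact hCne2 _ hcon
    · rw [f2, e1] at hcon
      rw [show j + 1 - m - 2 * L + 1 = 1 from by omega] at hcon
      exact hvC 1 le_rfl hm1 _ hcon
    · omega
    · omega
    · rw [f2, e1] at hcon
      have := hvI _ (by omega) _ (by omega) hcon
      omega
  -- e occurs only at the ends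
  have hPe : ∀ j, j ≤ N → P j = e → j = 0 ∨ j = N := by
    intro j hj hPj
    rcases Nat.lt_or_ge j m with h1 | h1
    · rw [hP1 j (by omega), ← hvm] at hPj
      have := hvI (m - j) (by omega) m le_rfl hPj
      omega
    · rcases Nat.lt_or_ge j (m + 2 * L + 1) with h2 | h2
      · exfalso
        have := hP2 (j - m) (by omega)
        rw [show m + (j - m) = j from by omega] at this
        rw [this, ← hvm] at hPj
        exact hvC m hm1 le_rfl (j - m) hPj.symm
      · have := hP3 (j - m - 2 * L) (by omega)
        rw [show m + 2 * L + (j - m - 2 * L) = j from by omega] at this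
        rw [this, ← hvm] at hPj
        have := hvI (j - m - 2 * L) (by omega) m le_rfl hPj
        omega
  -- nodes on the cycle occur only in the cycle section
  have hPcyc : ∀ j, j + 1 ≤ N → (∃ t1, P j = cyc t1) → (∃ t2, P (j + 1) = cyc t2) →
      m ≤ j ∧ j < m + 2 * L := by
    intro j hj ⟨t1, ht1⟩ ⟨t2, ht2⟩
    rcases hstep j (by omega) with ⟨h1, e1, e2⟩ | ⟨h1, h2, e1, e2⟩ | ⟨h1, h2, e1, e2⟩
    · exfalso
      rcases Nat.lt_or_ge (j + 1) m with h3 | h3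
      · rw [e2] at ht2
        exact hvoff (m - j - 1) (by omega) (by omega) t2 ht2
      · rw [e1] at ht1
        exact hvoff (m - j) (by omega) (by omega) t1 ht1
    · exact ⟨h1, h2⟩
    · exfalso
      rw [e2] at ht2
      exact hvoff (j - m - 2 * L + 1) (by omega) (by omega) t2 ht2
  -- distinctness of traversed edges
  have hdist : ∀ k j, k < j → j < N →
      ((P k = P j ∧ P (k + 1) = P (j + 1)) ∨ (P k = P (j + 1) ∧ P (k + 1) = P j)) →
      (m + 2 * L ≤ j ∧ k + 1 + j = 2 * m + 2 * L) := by
    intro k j hkj hj hmatch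
    rcases hstep k (by omega) with ⟨h1, e1, e2⟩ | ⟨h1, h2, e1, e2⟩ | ⟨h1, h2, e1, e2⟩ <;>
      rcases hstep j hj with ⟨g1, f1, f2⟩ | ⟨g1, g2, f1, f2⟩ | ⟨g1, g2, f1, f2⟩ <;>
      rw [e1, e2, f1, f2] at hmatch
    · exfalso
      rcases hmatch with ⟨q1, q2⟩ | ⟨q1, q2⟩
      · have := hvI _ (by omega) _ (by omega) q1
        omega
      · have r1 := hvI _ (by omega) _ (by omega) q1
        have r2 := hvI _ (by omega) _ (by omega) q2
        omega
    · exfalso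
      rcases hmatch with ⟨q1, _⟩ | ⟨q1, _⟩
      · exact hvC (m - k) (by omega) (by omega) _ q1
      · exact hvC (m - k) (by omega) (by omega) _ q1
    · rcases hmatch with ⟨q1, q2⟩ | ⟨q1, q2⟩
      · exfalso
        have r1 := hvI _ (by omega) _ (by omega) q1
        have r2 := hvI _ (by omega) _ (by omega) q2
        omega
      · have r1 := hvI _ (by omega) _ (by omega) q1
        have r2 := hvI _ (by omega) _ (by omega) q2
        omega
    · omega
    · exfalso
      have hk2 : k - m < 2 * L := by omega
      have hj2 : j - m < 2 * L := by omega
      have hre : k - m + 1 = (k - m) + 1 := rfl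
      have := hCinj2 (k - m) (j - m) hk2 hj2 (by
        rcases hmatch with ⟨q1, q2⟩ | ⟨q1, q2⟩
        · exact Or.inl ⟨q1, q2⟩
        · exact Or.inr ⟨q1, q2⟩)
      omega
    · exfalso
      rcases hmatch with ⟨q1, q2⟩ | ⟨q1, q2⟩
      · exact hvC _ (by omega) (by omega) _ q2.symm
      · exact hvC _ (by omega) (by omega) _ q1.symm
    · omega
    · omega
    · exfalso
      rcases hmatch with ⟨q1, q2⟩ | ⟨q1, q2⟩
      · have := hvI _ (by omega) _ (by omega) q1
        omega
      · have r1 := hvI _ (by omega) _ (by omega) q1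
        have r2 := hvI _ (by omega) _ (by omega) q2
        omega
  -- edge traversal counts
  set cnt : ℕ → V → V → ℕ := fun j a b =>
    ((Finset.range (min j N)).filter
      (fun k => (P k = a ∧ P (k + 1) = b) ∨ (P k = b ∧ P (k + 1) = a))).card with hcntdef
  set wfun : ℕ → V → V → ℕ := fun j a b =>
    if Odd (cnt j a b) then 3 - w a b else w a b with hwfundef
  have hcnt : ∀ j, j < N → cnt j (P j) (P (j + 1)) =
      if j < m + 2 * L then 0 else 1 := by
    intro j hj
    simp only [hcntdef]
    rw [min_eq_left (by omega : j ≤ N)]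
    by_cases hcase : j < m + 2 * L
    · rw [if_pos hcase, Finset.card_eq_zero, Finset.filter_eq_empty_iff]
      intro k hk
      rw [Finset.mem_range] at hk
      intro hcon
      have := hdist k j hk hj hcon
      omega
    · rw [if_neg hcase]
      have hpk0 : P (2 * m + 2 * L - 1 - j) = v (j - m - 2 * L + 1) := by
        rw [hP1 _ (by omega), show m - (2 * m + 2 * L - 1 - j) = j - m - 2 * L + 1
          from by omega]
      have hpk01 : P (2 * m + 2 * L - 1 - j + 1) = v (j - m - 2 * L) := by
        rw [hP1 _ (by omega), show m - (2 * m + 2 * L - 1 - j + 1) = j - m - 2 * L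
          from by omega]
      have hpj : P j = v (j - m - 2 * L) := by
        have := hP3 (j - m - 2 * L) (by omega)
        rwa [show m + 2 * L + (j - m - 2 * L) = j from by omega] at this
      have hpj1 : P (j + 1) = v (j - m - 2 * L + 1) := by
        have := hP3 (j - m - 2 * L + 1) (by omega)
        rwa [show m + 2 * L + (j - m - 2 * L + 1) = j + 1 from by omega] at this
      have hsingle : (Finset.range j).filter
          (fun k => (P k = P j ∧ P (k + 1) = P (j + 1)) ∨
            (P k = P (j + 1) ∧ P (k + 1) = P j)) = {2 * m + 2 * L - 1 - j} := by
        apply Finset.ext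
        intro k
        simp only [Finset.mem_filter, Finset.mem_range, Finset.mem_singleton]
        constructor
        · rintro ⟨hkr, hcon⟩
          have := hdist k j hkr hj hcon
          omega
        · rintro rfl
          refine ⟨by omega, Or.inr ⟨?_, ?_⟩⟩
          · rw [hpk0, hpj1]
          · rw [hpk01, hpj]
      rw [hsingle, Finset.card_singleton]
  have hcntstep : ∀ j, j < N → ∀ a b, cnt (j + 1) a b = cnt j a b +
      (if (P j = a ∧ P (j + 1) = b) ∨ (P j = b ∧ P (j + 1) = a) then 1 else 0) := by
    intro j hj a b
    simp only [hcntdef]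
    rw [min_eq_left (by omega : j + 1 ≤ N), min_eq_left (by omega : j ≤ N)]
    rw [Finset.range_add_one, Finset.filter_insert]
    split_ifs with h
    · rw [Finset.card_insert_of_notMem (fun hmem =>
        absurd (Finset.mem_range.mp (Finset.mem_filter.mp hmem).1) (lt_irrefl j))]
    · omega
  have hcntlast : ∀ a b, cnt (N + 1) a b = cnt N a b := by
    intro a b
    simp only [hcntdef]
    rw [min_eq_right (by omega : N ≤ N + 1), min_self]
  -- original weights along the walk
  have hOW : ∀ j, j < N → w (P j) (P (j + 1)) =
      if j < m then (if Even (m - j - 1) then 1 else 2)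
      else if j < m + 2 * L then (if Even (j - m) then 2 else 1)
      else (if Even (j - m - 2 * L) then 1 else 2) := by
    intro j hj
    rcases hstep j hj with ⟨h1, e1, e2⟩ | ⟨h1, h2, e1, e2⟩ | ⟨h1, h2, e1, e2⟩
    · rw [if_pos h1, e1, e2]
      have := hW (m - j - 1) (by omega)
      rw [show m - j - 1 + 1 = m - j from by omega] at this
      exact this
    · rw [if_neg (by omega), if_pos h2, e1, e2]
      exact hCw (j - m)
    · rw [if_neg (by omega), if_neg (by omega), e1, e2]
      rw [hsymm]
      exact hW (j - m - 2 * L) (by omega)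
  -- current weights along the walk
  have hCUR : ∀ j, j < N → wfun j (P j) (P (j + 1)) =
      if j < m + 2 * L then w (P j) (P (j + 1)) else 3 - w (P j) (P (j + 1)) := by
    intro j hj
    simp only [hwfundef]
    rw [hcnt j hj]
    by_cases h : j < m + 2 * L
    · have h0 : (if j < m + 2 * L then 0 else 1) = 0 := if_pos h
      rw [h0, if_neg (by simp [Nat.odd_iff]), if_pos h]
    · have h0 : (if j < m + 2 * L then 0 else 1) = 1 := if_neg h
      rw [h0, if_pos (by simp [Nat.odd_iff]), if_neg h]
  -- the alternation property
  have hALT : ∀ j, j + 2 ≤ N →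
      wfun j (P j) (P (j + 1)) + wfun (j + 1) (P (j + 1)) (P (j + 2)) = 3 := by
    intro j hj
    have s1 := hCUR j (by omega)
    have s2 : wfun (j + 1) (P (j + 1)) (P (j + 2)) =
        if j + 1 < m + 2 * L then w (P (j + 1)) (P (j + 2))
        else 3 - w (P (j + 1)) (P (j + 2)) := hCUR (j + 1) (by omega)
    have o1 := hOW j (by omega)
    have o2 : w (P (j + 1)) (P (j + 2)) =
        if j + 1 < m then (if Even (m - (j + 1) - 1) then 1 else 2)
        else if j + 1 < m + 2 * L then (if Even (j + 1 - m) then 2 else 1)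
        else (if Even (j + 1 - m - 2 * L) then 1 else 2) := hOW (j + 1) (by omega)
    rw [s1, s2]
    rcases Nat.lt_or_ge (j + 1) m with c1 | c1
    · rw [if_pos (show j < m + 2 * L from by omega),
        if_pos (show j + 1 < m + 2 * L from by omega), o1, o2]
      rw [if_pos (show j < m from by omega), if_pos c1]
      exact ite_sum12 (Or.inr (by omega))
    rcases Nat.eq_or_lt_of_le c1 with c2 | c2
    · rw [if_pos (show j < m + 2 * L from by omega),
        if_pos (show j + 1 < m + 2 * L from by omega), o1, o2]
      rw [if_pos (show j < m from by omega), if_neg (show ¬ j + 1 < m from by omega),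
        if_pos (show j + 1 < m + 2 * L from by omega)]
      rw [if_pos (show Even (m - j - 1) from by
          rw [show m - j - 1 = 0 from by omega]; exact Even.zero),
        if_pos (show Even (j + 1 - m) from by
          rw [show j + 1 - m = 0 from by omega]; exact Even.zero)]
    rcases Nat.lt_or_ge (j + 1) (m + 2 * L) with c3 | c3
    · rw [if_pos (show j < m + 2 * L from by omega), if_pos c3, o1, o2]
      rw [if_neg (show ¬ j < m from by omega),
        if_pos (show j < m + 2 * L from by omega),
        if_neg (show ¬ j + 1 < m from by omega), if_pos c3]
      exact ite_sum21 (Or.inl (by omega))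
    rcases Nat.eq_or_lt_of_le c3 with c4 | c4
    · rw [if_pos (show j < m + 2 * L from by omega),
        if_neg (show ¬ j + 1 < m + 2 * L from by omega), o1, o2]
      rw [if_neg (show ¬ j < m from by omega),
        if_pos (show j < m + 2 * L from by omega),
        if_neg (show ¬ j + 1 < m from by omega),
        if_neg (show ¬ j + 1 < m + 2 * L from by omega)]
      rw [if_neg (show ¬ Even (j - m) from by
          rw [show j - m = 2 * L - 1 from by omega, Nat.even_iff]; omega),
        if_pos (show Even (j + 1 - m - 2 * L) from by
          rw [show j + 1 - m - 2 * L = 0 from by omega]; exact Even.zero)]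
    · rw [if_neg (show ¬ j < m + 2 * L from by omega),
        if_neg (show ¬ j + 1 < m + 2 * L from by omega), o1, o2]
      rw [if_neg (show ¬ j < m from by omega),
        if_neg (show ¬ j < m + 2 * L from by omega),
        if_neg (show ¬ j + 1 < m from by omega),
        if_neg (show ¬ j + 1 < m + 2 * L from by omega)]
      have hp := ite_sum12 (a := j - m - 2 * L) (b := j + 1 - m - 2 * L)
        (Or.inl (by omega))
      have b1 : (if Even (j - m - 2 * L) then 1 else 2) ≤ 2 := by
        split_ifs <;> omega
      have b2 : (if Even (j + 1 - m - 2 * L) then 1 else 2) ≤ 2 := by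
        split_ifs <;> omega
      omega
  -- the configuration trail
  set pos : ℕ → SolPos V := fun j =>
    if j ≤ N then SolPos.node (P j) else SolPos.wait 0 with hposdef
  set cfg : Fin (N + 1 + 1) → Config V (singleBurst e e).m :=
    fun k => (wfun k.val, fun _ => pos k.val) with hcfgdef
  have hFin1 : ∀ i i' : Fin (singleBurst e e).m, i = i' := by
    intro i i'
    apply Fin.ext
    have hi : (i : ℕ) < 1 := i.isLt
    have hi' : (i' : ℕ) < 1 := i'.isLt
    omega
  have hP0 : P 0 = e := by
    rw [hP1 0 (by omega), Nat.sub_zero, hvm]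
  have hPN : P N = e := by
    have := hP3 m le_rfl
    rw [show m + 2 * L + m = N from by omega] at this
    rw [this, hvm]
  refine ⟨N + 1, cfg, ⟨⟨⟨?_, ?_, ?_, ?_, ?_, ?_⟩, ?_⟩, ?_⟩, ?_⟩
  · -- initial weights
    funext a b
    show wfun 0 a b = w a b
    simp only [hwfundef, hcntdef]
    norm_num
  · -- initial positions
    funext i
    show pos 0 = initPos (singleBurst e e) i
    have harr : (singleBurst e e).arrival i = 0 := by
      simp [Burst.arrival, singleBurst]
    simp only [initPos, harr, if_pos rfl]
    simp only [hposdef, if_pos (by omega : 0 ≤ N), hP0]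
    rfl
  · -- single steps
    intro j hj
    constructor
    · intro i
      by_cases hjN : j < N
      · refine Or.inr (Or.inr (Or.inr ⟨P j, ?_, Or.inr ⟨P (j + 1), hPadj j hjN, ?_⟩⟩))
        · show pos j = SolPos.node (P j)
          simp only [hposdef]
          rw [if_pos (by omega : j ≤ N)]
        · show pos (j + 1) = SolPos.node (P (j + 1))
          simp only [hposdef]
          rw [if_pos (by omega : j + 1 ≤ N)]
      · have hjN' : j = N := by omega
        subst hjN'
        refine Or.inr (Or.inr (Or.inr ⟨P N, ?_, Or.inl ⟨?_, ?_⟩⟩))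
        · show pos N = SolPos.node (P N)
          simp only [hposdef]
          rw [if_pos le_rfl]
        · show P N = (singleBurst e e).exit i
          rw [hPN]
          rfl
        · show pos (N + 1) = SolPos.wait 0
          simp only [hposdef]
          rw [if_neg (by omega : ¬ N + 1 ≤ N)]
    · intro p q
      by_cases hjN : j < N
      · have hch2 : (MovesAlong (fun _ : Fin (singleBurst e e).m => pos j)
            (fun _ => pos (j + 1)) p q ∨
            MovesAlong (fun _ : Fin (singleBurst e e).m => pos j)
            (fun _ => pos (j + 1)) q p) ↔
            ((P j = p ∧ P (j + 1) = q) ∨ (P j = q ∧ P (j + 1) = p)) := by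
          have hpj : pos j = SolPos.node (P j) := by
            simp only [hposdef]; rw [if_pos (by omega : j ≤ N)]
          have hpj1 : pos (j + 1) = SolPos.node (P (j + 1)) := by
            simp only [hposdef]; rw [if_pos (by omega : j + 1 ≤ N)]
          constructor
          · rintro (⟨i0, h1, h2⟩ | ⟨i0, h1, h2⟩)
            · rw [hpj] at h1
              rw [hpj1] at h2
              injection h1 with h1
              injection h2 with h2
              exact Or.inl ⟨h1, h2⟩
            · rw [hpj] at h1
              rw [hpj1] at h2
              injection h1 with h1
              injection h2 with h2
              exact Or.inr ⟨h1, h2⟩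
          · rintro (⟨h1, h2⟩ | ⟨h1, h2⟩)
            · exact Or.inl ⟨⟨0, Nat.one_pos⟩, by rw [hpj, h1], by rw [hpj1, h2]⟩
            · exact Or.inr ⟨⟨0, Nat.one_pos⟩, by rw [hpj, h1], by rw [hpj1, h2]⟩
        constructor
        · intro hmov
          have hcond := hch2.mp hmov
          have hwb : 1 ≤ w p q ∧ w p q ≤ 2 := by
            rcases hcond with ⟨h1, h2⟩ | ⟨h1, h2⟩
            · rw [← h1, ← h2]
              rcases hc.w12 (hPadj j hjN) with h | h <;> omega
            · rw [← h2, ← h1]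
              rcases hc.w12 (G.symm _ _ (hPadj j hjN)) with h | h <;> omega
          show wfun (j + 1) p q = 3 - wfun j p q
          simp only [hwfundef]
          rw [hcntstep j hjN p q, if_pos hcond]
          by_cases ho : Odd (cnt j p q)
          · rw [if_pos ho, if_neg (by rw [Nat.odd_iff] at ho ⊢; omega)]
            omega
          · rw [if_neg ho, if_pos (by rw [Nat.odd_iff] at ho ⊢; omega)]
        · intro hnmov
          have hcond : ¬ ((P j = p ∧ P (j + 1) = q) ∨ (P j = q ∧ P (j + 1) = p)) :=
            fun h => hnmov (hch2.mpr h)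
          show wfun (j + 1) p q = wfun j p q
          simp only [hwfundef]
          rw [hcntstep j hjN p q, if_neg hcond, Nat.add_zero]
      · have hjN' : j = N := by omega
        subst hjN'
        constructor
        · intro hmov
          exfalso
          have hw0 : pos (N + 1) = SolPos.wait 0 := by
            simp only [hposdef]; rw [if_neg (by omega : ¬ N + 1 ≤ N)]
          rcases hmov with ⟨i0, _, h2⟩ | ⟨i0, _, h2⟩ <;>
            · have h2' : pos (N + 1) = SolPos.node _ := h2
              rw [hw0] at h2'
              cases h2'
        · intro _
          show wfun (N + 1) p q = wfun N p q
          simp only [hwfundef]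
          rw [hcntlast]
  · -- the first step moves into the graph
    intro h i n hn
    refine ⟨P 1, ?_⟩
    show pos 1 = SolPos.node (P 1)
    simp only [hposdef, if_pos (by omega : 1 ≤ N)]
  · -- two-step conditions
    intro j hj i
    refine ⟨?_, ?_, ?_, ?_⟩
    · intro n hn hx hwait
      exfalso
      have h2 : pos j = SolPos.wait 1 := hwait
      simp only [hposdef] at h2
      by_cases hc1 : j ≤ N
      · rw [if_pos hc1] at h2
        cases h2
      · rw [if_neg hc1] at h2
        injection h2 with h3
        omega
    · intro hq hx hp
      have hq' : pos (j + 1) = SolPos.node e := hq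
      simp only [hposdef] at hq'
      by_cases hc1 : j + 1 ≤ N
      · rw [if_pos hc1] at hq'
        injection hq' with h3
        have := hPe (j + 1) hc1 h3
        show pos (j + 2) = SolPos.wait 0
        simp only [hposdef]
        rw [if_neg (by omega)]
      · rw [if_neg hc1] at hq'
        cases hq'
    · intro p q r hp hq hqInt hr
      have hp' : pos j = SolPos.node p := hp
      have hq' : pos (j + 1) = SolPos.node q := hq
      have hr' : pos (j + 2) = SolPos.node r := hr
      by_cases hc2 : j + 2 ≤ N
      · simp only [hposdef] at hp' hq' hr'
        rw [if_pos (by omega : j ≤ N)] at hp'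
        rw [if_pos (by omega : j + 1 ≤ N)] at hq'
        rw [if_pos (by omega : j + 2 ≤ N)] at hr'
        injection hp' with hpe
        injection hq' with hqe
        injection hr' with hre
        subst hpe hqe hre
        have halt2 := hALT j hc2
        show wfun j (P j) (P (j + 1)) ≠ wfun (j + 1) (P (j + 1)) (P (j + 2))
        omega
      · exfalso
        simp only [hposdef] at hr'
        rw [if_neg (by omega)] at hr'
        cases hr'
    · intro hne
      have hc2 : j + 2 ≤ N := by
        by_contra hcc
        apply hne
        show pos (j + 2) = SolPos.wait 0
        simp only [hposdef]
        rw [if_neg (by omega)]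
      constructor
      · show pos (j + 2) ≠ pos (j + 1)
        simp only [hposdef]
        rw [if_pos (by omega : j + 2 ≤ N), if_pos (by omega : j + 1 ≤ N)]
        intro hcon
        injection hcon with h3
        exact hPne1 (j + 1) (by omega) h3
      · show pos (j + 2) ≠ pos j
        simp only [hposdef]
        rw [if_pos (by omega : j + 2 ≤ N), if_pos (by omega : j ≤ N)]
        intro hcon
        injection hcon with h3
        exact hPne2 j hc2 h3
  · -- not final before the end
    intro j hj hfin
    have := hfin ⟨0, Nat.one_pos⟩
    simp only [hcfgdef, hposdef] at this
    rw [if_pos (by omega : j ≤ N)] at this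
    cases this
  · -- legality
    intro j hj
    constructor
    · intro i i' hii'
      exact absurd (hFin1 i i') hii'
    · intro i i' hii'
      exact absurd (hFin1 i i') hii'
  · -- final configuration
    intro i
    show pos (N + 1) = SolPos.wait 0
    simp only [hposdef, if_neg (by omega : ¬ N + 1 ≤ N)]
  · -- each cycle edge is used exactly once
    intro t
    obtain ⟨r, ⟨hrlt, hrcond⟩, hruniq⟩ := hCbij t
    have hc1 : P (m + r) = C r := hP2 r (by omega)
    have hc2 : P (m + r + 1) = C (r + 1) := by
      have := hP2 (r + 1) (by omega)
      rwa [show m + (r + 1) = m + r + 1 from by omega] at this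
    have e1 : pos (m + r) = SolPos.node (P (m + r)) := by
      simp only [hposdef]; rw [if_pos (by omega : m + r ≤ N)]
    have e2 : pos (m + r + 1) = SolPos.node (P (m + r + 1)) := by
      simp only [hposdef]; rw [if_pos (by omega : m + r + 1 ≤ N)]
    refine ⟨⟨m + r, by omega⟩, ⟨⟨0, Nat.one_pos⟩, ?_⟩, ?_⟩
    · rcases hrcond with ⟨q1, q2⟩ | ⟨q1, q2⟩
      · refine Or.inl ⟨?_, ?_⟩
        · show pos (m + r) = SolPos.node (cyc t)
          rw [e1, hc1, q1]
        · show pos (m + r + 1) = SolPos.node (cyc (t + 1))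
          rw [e2, hc2, q2]
      · refine Or.inr ⟨?_, ?_⟩
        · show pos (m + r) = SolPos.node (cyc (t + 1))
          rw [e1, hc1, q1]
        · show pos (m + r + 1) = SolPos.node (cyc t)
          rw [e2, hc2, q2]
    · rintro j' ⟨i, hcase⟩
      apply Fin.ext
      show (j' : ℕ) = m + r
      have hj'lt : (j' : ℕ) < N + 1 := j'.isLt
      have hj'N : (j' : ℕ) + 1 ≤ N := by
        by_contra hcc
        have hw0 : pos ((j' : ℕ) + 1) = SolPos.wait 0 := by
          simp only [hposdef]; rw [if_neg (by omega)]
        rcases hcase with ⟨_, q2⟩ | ⟨_, q2⟩ <;>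
          · have q2' : pos ((j' : ℕ) + 1) = SolPos.node _ := q2
            rw [hw0] at q2'
            cases q2'
      have ej : pos (j' : ℕ) = SolPos.node (P (j' : ℕ)) := by
        simp only [hposdef]; rw [if_pos (by omega)]
      have ej1 : pos ((j' : ℕ) + 1) = SolPos.node (P ((j' : ℕ) + 1)) := by
        simp only [hposdef]; rw [if_pos (by omega)]
      have hPj : (∃ t1, P (j' : ℕ) = cyc t1) ∧ ∃ t2, P ((j' : ℕ) + 1) = cyc t2 := by
        rcases hcase with ⟨q1, q2⟩ | ⟨q1, q2⟩
        · have q1' : pos (j' : ℕ) = SolPos.node (cyc t) := q1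
          have q2' : pos ((j' : ℕ) + 1) = SolPos.node (cyc (t + 1)) := q2
          rw [ej] at q1'
          rw [ej1] at q2'
          injection q1' with q1e
          injection q2' with q2e
          exact ⟨⟨t, q1e⟩, ⟨t + 1, q2e⟩⟩
        · have q1' : pos (j' : ℕ) = SolPos.node (cyc (t + 1)) := q1
          have q2' : pos ((j' : ℕ) + 1) = SolPos.node (cyc t) := q2
          rw [ej] at q1'
          rw [ej1] at q2'
          injection q1' with q1e
          injection q2' with q2e
          exact ⟨⟨t + 1, q1e⟩, ⟨t, q2e⟩⟩
      obtain ⟨hmle, hlt⟩ := hPcyc (j' : ℕ) hj'N hPj.1 hPj.2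
      have hPr1 : P (j' : ℕ) = C ((j' : ℕ) - m) := by
        have := hP2 ((j' : ℕ) - m) (by omega)
        rwa [show m + ((j' : ℕ) - m) = (j' : ℕ) from by omega] at this
      have hPr2 : P ((j' : ℕ) + 1) = C ((j' : ℕ) - m + 1) := by
        have := hP2 ((j' : ℕ) - m + 1) (by omega)
        rwa [show m + ((j' : ℕ) - m + 1) = (j' : ℕ) + 1 from by omega] at this
      have hr' := hruniq ((j' : ℕ) - m) ⟨by omega, by
        rcases hcase with ⟨q1, q2⟩ | ⟨q1, q2⟩
        · have q1' : pos (j' : ℕ) = SolPos.node (cyc t) := q1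
          have q2' : pos ((j' : ℕ) + 1) = SolPos.node (cyc (t + 1)) := q2
          rw [ej, hPr1] at q1'
          rw [ej1, hPr2] at q2'
          injection q1' with q1e
          injection q2' with q2e
          exact Or.inl ⟨q1e, q2e⟩
        · have q1' : pos (j' : ℕ) = SolPos.node (cyc (t + 1)) := q1
          have q2' : pos ((j' : ℕ) + 1) = SolPos.node (cyc t) := q2
          rw [ej, hPr1] at q1'
          rw [ej1, hPr2] at q2'
          injection q1' with q1e
          injection q2' with q2e
          exact Or.inr ⟨q1e, q2e⟩⟩
      omega

end Soliton
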